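/- Let φ be a unidimensional morphism of constant prime length s prolongable on a ∈ A such that there exists i ∈ {0,…,s−1} with φ(b)_i = a for every b ∈ A. Then for every positive integer m, any s consecutive terms of the sequence k ↦ φ^ω(a)_{mk} contain the letter a. -/
import Mathlib


theorem stmt_16 {A : Type*} (s : ℕ) (hs : s.Prime)
    (φ : A → Fin s → A) (a : A)
    (hprol : φ a ⟨0, hs.pos⟩ = a)
    (w : ℕ → A) (hw0 : w 0 = a)
    (hfix : ∀ (n : ℕ) (r : Fin s), w (s * n + (r : ℕ)) = φ (w n) r)
    (i : Fin s) (hi : ∀ b : A, φ b i = a)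
    (m : ℕ) (hm : 1 ≤ m) :
    ∀ k : ℕ, ∃ j : ℕ, j < s ∧ w (m * (k + j)) = a := by
  haveI : Fact s.Prime := ⟨hs⟩
  haveI : NeZero s := ⟨hs.pos.ne'⟩
  -- w (s*q + i) = a
  have key1 : ∀ q : ℕ, w (s * q + (i : ℕ)) = a := fun q => by
    rw [hfix q i, hi]
  -- w (s^e * t) = a if w t = a
  have key2 : ∀ (e t : ℕ), w t = a → w (s ^ e * t) = a := by
    intro e
    induction e with
    | zero => intro t ht; simpa using ht
    | succ e ih =>
      intro t ht
      have h0 : w (s * (s ^ e * t) + ((⟨0, hs.pos⟩ : Fin s) : ℕ)) = a := by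
        rw [hfix, ih t ht, hprol]
      have : s ^ (e + 1) * t = s * (s ^ e * t) + ((⟨0, hs.pos⟩ : Fin s) : ℕ) := by
        simp only [Fin.val_mk, add_zero, pow_succ]; ring
      rw [this]; exact h0
  intro k
  set e := m.factorization s with he
  set m' := m / s ^ e with hm'
  have hmeq : s ^ e * m' = m := Nat.ordProj_mul_ordCompl_eq_self m s
  have hndvd : ¬ s ∣ m' := Nat.not_dvd_ordCompl hs (Nat.one_le_iff_ne_zero.mp hm)
  have hm'ne : (m' : ZMod s) ≠ 0 := by
    rw [Ne, ZMod.natCast_eq_zero_iff]; exact hndvd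
  set u : ZMod s := (m' : ZMod s)⁻¹ * (i : ZMod s) - (k : ZMod s) with hu
  refine ⟨u.val, u.val_lt, ?_⟩
  have hcast : ((u.val : ℕ) : ZMod s) = u := ZMod.natCast_rightInverse u
  have hzm : ((m' * (k + u.val) : ℕ) : ZMod s) = ((i : ℕ) : ZMod s) := by
    push_cast
    rw [hcast]
    have h3 : (k : ZMod s) + u = (m' : ZMod s)⁻¹ * (i : ZMod s) := by rw [hu]; ring
    rw [h3, ← mul_assoc, mul_inv_cancel₀ hm'ne, one_mul]
  have hmod : (m' * (k + u.val)) % s = (i : ℕ) := by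
    have := (ZMod.natCast_eq_natCast_iff _ _ _).mp hzm
    have h2 : (m' * (k + u.val)) % s = (i : ℕ) % s := this
    rwa [Nat.mod_eq_of_lt i.isLt] at h2
  have hdecomp : m' * (k + u.val) = s * (m' * (k + u.val) / s) + (i : ℕ) := by
    conv_lhs => rw [← Nat.div_add_mod (m' * (k + u.val)) s]
    rw [hmod]
  have : w (m' * (k + u.val)) = a := by rw [hdecomp]; exact key1 _
  calc w (m * (k + u.val)) = w (s ^ e * (m' * (k + u.val))) := by
        rw [← hmeq, mul_assoc]
    _ = a := key2 _ _ this
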